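/- (Björner) Let M be a loopless matroid of rank d+1 on the ground set E = {0, 1, …, n}, and write its reduced characteristic polynomial as χ̄_M(t) := χ_M(t)/(t−1) = m_0 t^d − m_1 t^{d−1} + ⋯ + (−1)^d m_d. Then m_k equals the number of k-step flags F_1 ⊊ F_2 ⊊ ⋯ ⊊ F_k of nonempty proper flats of M that are initial, meaning r(F_i) = i for all i, and descending, meaning min(F_1) > min(F_2) > ⋯ > min(F_k) > 0. -/

import Mathlib

/-- A matroid on a finite ground set `E`, given by the independence axioms (I1)-(I3). -/
structure FinMatroid (E : Type*) [Fintype E] [DecidableEq E] where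
  Indep : Finset E → Prop
  indep_empty : Indep ∅
  indep_subset : ∀ ⦃I J : Finset E⦄, Indep J → I ⊆ J → Indep I
  indep_exchange : ∀ ⦃I J : Finset E⦄, Indep I → Indep J → I.card < J.card →
    ∃ e ∈ J, e ∉ I ∧ Indep (insert e I)

namespace FinMatroid

variable {E : Type*} [Fintype E] [DecidableEq E]

open Classical in
/-- The rank of a subset `A`: the maximal cardinality of an independent subset of `A`. -/
noncomputable def rank (M : FinMatroid E) (A : Finset E) : ℕ :=
  (A.powerset.filter fun I => M.Indep I).sup Finset.card

/-- The rank of the matroid. -/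
noncomputable def rk (M : FinMatroid E) : ℕ := M.rank Finset.univ

/-- The closure of a subset `A`: all elements `x` with `r(A ∪ {x}) = r(A)`. -/
noncomputable def closure (M : FinMatroid E) (A : Finset E) : Finset E :=
  Finset.univ.filter fun x => M.rank (insert x A) = M.rank A

/-- A flat is a closed subset. -/
def IsFlat (M : FinMatroid E) (F : Finset E) : Prop := M.closure F = F

/-- A matroid is loopless if the closure of the empty set is empty. -/
def Loopless (M : FinMatroid E) : Prop := M.closure ∅ = ∅

/-- A basis is a maximal independent set. -/
def IsBase (M : FinMatroid E) (B : Finset E) : Prop :=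
  M.Indep B ∧ ∀ ⦃J⦄, M.Indep J → B ⊆ J → J = B

open Classical in
/-- The finset of all flats of `M`. -/
noncomputable def flats (M : FinMatroid E) : Finset (Finset E) :=
  Finset.univ.filter fun F => M.IsFlat F

open Classical in
/-- `mu` is the Möbius function of the lattice of flats of `M`: it satisfies `mu F F = 1`,
`mu F F' = 0` when `¬ F ⊆ F'`, and for `F ⊂ F'` the sum of `mu F G` over the flats
`F ⊆ G ⊆ F'` vanishes. These properties determine `mu` uniquely on pairs of flats. -/
def IsMobius (M : FinMatroid E) (mu : Finset E → Finset E → ℤ) : Prop :=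
  (∀ F ∈ M.flats, mu F F = 1) ∧
  (∀ F ∈ M.flats, ∀ F' ∈ M.flats, ¬F ⊆ F' → mu F F' = 0) ∧
  (∀ F ∈ M.flats, ∀ F' ∈ M.flats, F ⊂ F' →
    ∑ G ∈ M.flats.filter (fun G => F ⊆ G ∧ G ⊆ F'), mu F G = 0)

open Classical in
/-- The characteristic polynomial of a matroid `M` (relative to the Möbius function `mu` of
its lattice of flats): `χ_M(t) = Σ_{F ∈ L(M)} μ(∅,F) t^{r(E) - r(F)}` if `M` is loopless,
and `0` if `M` has a loop. -/
noncomputable def charPoly (M : FinMatroid E) (mu : Finset E → Finset E → ℤ) : Polynomial ℤ :=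
  if M.Loopless then
    ∑ F ∈ M.flats, Polynomial.C (mu ∅ F) * Polynomial.X ^ (M.rk - M.rank F)
  else 0

end FinMatroid

namespace FinMatroid

open Classical Finset

variable {E : Type*} [Fintype E] [DecidableEq E] (M : FinMatroid E)

lemma rank_mono {A B : Finset E} (h : A ⊆ B) : M.rank A ≤ M.rank B := by
  classical
  apply Finset.sup_mono
  intro I hI
  simp only [Finset.mem_filter, Finset.mem_powerset] at *
  exact ⟨hI.1.trans h, hI.2⟩

lemma card_le_rank {I A : Finset E} (hIA : I ⊆ A) (hI : M.Indep I) : I.card ≤ M.rank A := by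
  classical
  exact Finset.le_sup (by simp [Finset.mem_filter, Finset.mem_powerset, hIA, hI])

lemma exists_basis (A : Finset E) : ∃ I, I ⊆ A ∧ M.Indep I ∧ I.card = M.rank A := by
  classical
  obtain ⟨I, hI, hcard⟩ := Finset.exists_mem_eq_sup
    (A.powerset.filter fun I => M.Indep I) ⟨∅, by simp [M.indep_empty]⟩ Finset.card
  simp only [Finset.mem_filter, Finset.mem_powerset] at hI
  exact ⟨I, hI.1, hI.2, hcard.symm⟩

lemma rank_empty : M.rank (∅ : Finset E) = 0 := by
  classical
  apply Nat.le_antisymm _ (Nat.zero_le _)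
  apply Finset.sup_le
  intro I hI
  simp only [Finset.mem_filter, Finset.mem_powerset, Finset.subset_empty] at hI
  simp [hI.1]

lemma rank_insert_le (A : Finset E) (x : E) : M.rank (insert x A) ≤ M.rank A + 1 := by
  classical
  apply Finset.sup_le
  intro I hI
  simp only [Finset.mem_filter, Finset.mem_powerset] at hI
  by_cases hx : x ∈ I
  · have h1 : I.erase x ⊆ A := by
      intro y hy
      rcases Finset.mem_insert.1 (hI.1 (Finset.mem_of_mem_erase hy)) with h | h
      · exact absurd h (Finset.ne_of_mem_erase hy)
      · exact h
    have h2 := M.card_le_rank h1 (M.indep_subset hI.2 (Finset.erase_subset _ _))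
    have h3 := Finset.card_erase_of_mem hx
    have h4 : 1 ≤ I.card := Finset.card_pos.2 ⟨x, hx⟩
    omega
  · have h1 : I ⊆ A := fun y hy =>
      (Finset.mem_insert.1 (hI.1 hy)).resolve_left (fun e => hx (e ▸ hy))
    have := M.card_le_rank h1 hI.2
    omega

lemma indep_extend {I A : Finset E} (hIA : I ⊆ A) (hI : M.Indep I) (h : I.card < M.rank A) :
    ∃ e ∈ A, e ∉ I ∧ M.Indep (insert e I) := by
  obtain ⟨J, hJA, hJ, hJc⟩ := M.exists_basis A
  obtain ⟨e, heJ, heI, hind⟩ := M.indep_exchange hI hJ (by omega)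
  exact ⟨e, hJA heJ, heI, hind⟩

lemma exists_basis_superset {I A : Finset E} (hIA : I ⊆ A) (hI : M.Indep I) :
    ∃ J, I ⊆ J ∧ J ⊆ A ∧ M.Indep J ∧ J.card = M.rank A := by
  classical
  have hle := M.card_le_rank hIA hI
  obtain ⟨m, hm⟩ : ∃ m, m = M.rank A - I.card := ⟨_, rfl⟩
  induction m generalizing I with
  | zero =>
    exact ⟨I, Finset.Subset.refl I, hIA, hI, by omega⟩
  | succ m ih =>
    obtain ⟨e, heA, heI, hind⟩ := M.indep_extend hIA hI (by omega)
    obtain ⟨J, hJ1, hJ2, hJ3, hJ4⟩ := ih (Finset.insert_subset heA hIA) hind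
      (M.card_le_rank (Finset.insert_subset heA hIA) hind)
      (by rw [Finset.card_insert_of_notMem heI]; omega)
    exact ⟨J, (Finset.subset_insert e I).trans hJ1, hJ2, hJ3, hJ4⟩

lemma rank_union_eq {A B : Finset E} (h : ∀ x ∈ B, M.rank (insert x A) = M.rank A) :
    M.rank (A ∪ B) = M.rank A := by
  classical
  refine le_antisymm ?_ (M.rank_mono Finset.subset_union_left)
  obtain ⟨I, hIA, hI, hIc⟩ := M.exists_basis A
  apply Finset.sup_le
  intro J hJ
  simp only [Finset.mem_filter, Finset.mem_powerset] at hJ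
  by_contra hc
  push_neg at hc
  obtain ⟨e, heJ, heI, hind⟩ := M.indep_exchange hI hJ.2 (by omega)
  rcases Finset.mem_union.1 (hJ.1 heJ) with hA | hB
  · have := M.card_le_rank (Finset.insert_subset hA hIA) hind
    rw [Finset.card_insert_of_notMem heI] at this
    omega
  · have := M.card_le_rank (Finset.insert_subset_insert _ hIA) hind
    rw [h e hB, Finset.card_insert_of_notMem heI] at this
    omega

lemma mem_closure {x : E} {A : Finset E} :
    x ∈ M.closure A ↔ M.rank (insert x A) = M.rank A := by
  classical
  simp [closure]

lemma subset_closure (A : Finset E) : A ⊆ M.closure A := fun x hx => by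
  rw [M.mem_closure, Finset.insert_eq_self.2 hx]

lemma rank_closure (A : Finset E) : M.rank (M.closure A) = M.rank A := by
  have h : M.closure A = A ∪ M.closure A :=
    (Finset.union_eq_right.2 (M.subset_closure A)).symm
  rw [h]
  exact M.rank_union_eq (fun x hx => M.mem_closure.1 hx)

lemma closure_isFlat (A : Finset E) : M.IsFlat (M.closure A) := by
  unfold IsFlat
  apply Finset.Subset.antisymm _ (M.subset_closure _)
  intro x hx
  rw [M.mem_closure] at hx ⊢
  have h1 : M.rank A ≤ M.rank (insert x A) := M.rank_mono (Finset.subset_insert _ _)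
  have h2 : M.rank (insert x A) ≤ M.rank (insert x (M.closure A)) :=
    M.rank_mono (Finset.insert_subset_insert _ (M.subset_closure A))
  rw [hx, M.rank_closure] at h2
  omega

lemma insert_indep_of_rank_lt {J A : Finset E} {x : E} (hJA : J ⊆ A) (hJ : M.Indep J)
    (hJc : J.card = M.rank A) (hx : M.rank A < M.rank (insert x A)) :
    M.Indep (insert x J) := by
  obtain ⟨K, hKA, hK, hKc⟩ := M.exists_basis (insert x A)
  obtain ⟨e, heK, heJ, hind⟩ := M.indep_exchange hJ hK (by omega)
  rcases Finset.mem_insert.1 (hKA heK) with rfl | hA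
  · exact hind
  · have := M.card_le_rank (Finset.insert_subset hA hJA) hind
    rw [Finset.card_insert_of_notMem heJ] at this
    omega

lemma not_mem_flat_rank {F : Finset E} {x : E} (hF : M.IsFlat F) (hx : x ∉ F) :
    M.rank F < M.rank (insert x F) := by
  have h1 : M.rank F ≤ M.rank (insert x F) := M.rank_mono (Finset.subset_insert _ _)
  have h2 : M.rank (insert x F) ≠ M.rank F := by
    intro h
    exact hx (hF ▸ M.mem_closure.2 h)
  omega

lemma closure_subset_of_flat {X F : Finset E} (hXF : X ⊆ F) (hF : M.IsFlat F) :
    M.closure X ⊆ F := by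
  intro y hy
  by_contra hyF
  have hy' := M.mem_closure.1 hy
  have hr := M.not_mem_flat_rank hF hyF
  obtain ⟨I, hIX, hI, hIc⟩ := M.exists_basis X
  obtain ⟨J, hIJ, hJF, hJ, hJc⟩ := M.exists_basis_superset (hIX.trans hXF) hI
  have hind : M.Indep (insert y J) := M.insert_indep_of_rank_lt hJF hJ hJc hr
  have h2 : M.Indep (insert y I) := M.indep_subset hind (Finset.insert_subset_insert _ hIJ)
  have hyI : y ∉ I := fun h => hyF (hXF (hIX h))
  have h3 := M.card_le_rank (Finset.insert_subset_insert _ hIX) h2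
  rw [Finset.card_insert_of_notMem hyI, hy'] at h3
  omega

lemma rank_insert_flat {F : Finset E} {x : E} (hF : M.IsFlat F) (hx : x ∉ F) :
    M.rank (insert x F) = M.rank F + 1 := by
  have h1 := M.not_mem_flat_rank hF hx
  have h2 := M.rank_insert_le F x
  omega

lemma flat_rank_lt {F F' : Finset E} (hF : M.IsFlat F) (h : F ⊆ F') (hne : F ≠ F') :
    M.rank F < M.rank F' := by
  obtain ⟨x, hxF', hxF⟩ := Finset.exists_of_ssubset (Finset.ssubset_iff_subset_ne.2 ⟨h, hne⟩)
  calc M.rank F < M.rank (insert x F) := M.not_mem_flat_rank hF hxF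
    _ ≤ M.rank F' := M.rank_mono (Finset.insert_subset hxF' h)

lemma eq_of_flat_subset_rank {F F' : Finset E} (hF : M.IsFlat F) (h : F ⊆ F')
    (hr : M.rank F' ≤ M.rank F) : F' = F := by
  by_contra hne
  exact absurd hr (not_le.2 (M.flat_rank_lt hF h (Ne.symm hne)))

lemma univ_isFlat : M.IsFlat (Finset.univ : Finset E) := by
  classical
  apply Finset.Subset.antisymm _ (M.subset_closure _)
  intro x _
  exact Finset.mem_univ x

lemma rank_singleton (hM : M.Loopless) (x : E) : M.rank {x} = 1 := by
  have h1 : M.rank {x} ≤ M.rank ∅ + 1 := by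
    have := M.rank_insert_le ∅ x
    simpa using this
  have h2 : M.rank {x} ≠ 0 := by
    intro h
    have : x ∈ M.closure ∅ := M.mem_closure.2 (by rw [M.rank_empty]; simpa using h)
    rw [hM] at this
    simp at this
  rw [M.rank_empty] at h1
  omega

lemma rank_pos_of_nonempty (hM : M.Loopless) {F : Finset E} (h : F.Nonempty) :
    1 ≤ M.rank F := by
  obtain ⟨x, hx⟩ := h
  calc 1 = M.rank {x} := (M.rank_singleton hM x).symm
    _ ≤ M.rank F := M.rank_mono (Finset.singleton_subset_iff.2 hx)

lemma nonempty_of_rank_pos {F : Finset E} (h : 1 ≤ M.rank F) : F.Nonempty := by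
  rcases F.eq_empty_or_nonempty with rfl | hne
  · rw [M.rank_empty] at h; omega
  · exact hne

lemma mem_flats {F : Finset E} : F ∈ M.flats ↔ M.IsFlat F := by
  classical
  simp [flats]

end FinMatroid
namespace FinMatroid

open Classical Finset

variable {E : Type*} [Fintype E] [DecidableEq E] [LinearOrder E] (M : FinMatroid E)

open Classical in
/-- The set of descending initial flags of length `k` consisting of flats contained in `F`. -/
noncomputable def flagSet (k : ℕ) (F : Finset E) : Finset (Fin k → Finset E) :=
  Finset.univ.filter fun f =>
    (∀ i, M.IsFlat (f i)) ∧ (∀ i j, i < j → f i ⊂ f j) ∧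
    (∀ i : Fin k, M.rank (f i) = (i : ℕ) + 1) ∧
    (∀ i j, i < j → (f j).min < (f i).min) ∧
    (∀ i, f i ⊆ F)

lemma mem_flagSet {k : ℕ} {F : Finset E} {f : Fin k → Finset E} :
    f ∈ M.flagSet k F ↔
      (∀ i, M.IsFlat (f i)) ∧ (∀ i j, i < j → f i ⊂ f j) ∧
      (∀ i : Fin k, M.rank (f i) = (i : ℕ) + 1) ∧
      (∀ i j, i < j → (f j).min < (f i).min) ∧
      (∀ i, f i ⊆ F) := by
  classical
  simp [flagSet]

lemma flagSet_zero_card (F : Finset E) : (M.flagSet 0 F).card = 1 := by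
  classical
  have h : M.flagSet 0 F = Finset.univ := by
    apply Finset.eq_univ_of_forall
    intro f
    rw [mem_flagSet]
    refine ⟨fun i => i.elim0, fun i => i.elim0, fun i => i.elim0, fun i => i.elim0,
      fun i => i.elim0⟩
  rw [h, Finset.card_univ, Fintype.card_eq_one_iff]
  exact ⟨fun i => i.elim0, fun f => funext fun i => i.elim0⟩

lemma flagSet_eq_empty {k : ℕ} {F : Finset E} (h : M.rank F < k) :
    M.flagSet k F = ∅ := by
  classical
  rw [Finset.eq_empty_iff_forall_notMem]
  intro f hf
  rw [mem_flagSet] at hf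
  have hk : 0 < k := by omega
  have h1 := hf.2.2.1 ⟨k - 1, by omega⟩
  have h2 := M.rank_mono (hf.2.2.2.2 ⟨k - 1, by omega⟩)
  simp only [h1] at h2
  omega

lemma flag_nonempty (hM : M.Loopless) {k : ℕ} {F : Finset E} {f : Fin k → Finset E}
    (hf : f ∈ M.flagSet k F) (i : Fin k) : (f i).Nonempty := by
  apply M.nonempty_of_rank_pos
  rw [(M.mem_flagSet.1 hf).2.2.1 i]
  omega

lemma flag_subset_top {k : ℕ} {F : Finset E} {f : Fin (k + 1) → Finset E}
    (hf : f ∈ M.flagSet (k + 1) F) (i : Fin (k + 1)) : f i ⊆ f ⟨k, by omega⟩ := by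
  rcases eq_or_lt_of_le (Nat.lt_succ_iff.1 i.isLt) with h | h
  · have : i = ⟨k, by omega⟩ := by
      apply Fin.ext; exact h
    rw [this]
  · exact ((M.mem_flagSet.1 hf).2.1 i ⟨k, by omega⟩ (by simp [Fin.lt_def]; omega)).subset

/-- Partition of flags in `F` of length `k` according to their top flat. -/
lemma flagSet_card_eq_sum (hM : M.Loopless) {F : Finset E} (hF : M.IsFlat F) (k : ℕ) :
    (M.flagSet k F).card =
      ∑ G ∈ M.flats.filter (fun G => G ⊆ F ∧ M.rank G = k), (M.flagSet k G).card := by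
  classical
  rcases Nat.eq_zero_or_pos k with rfl | hk
  · have hfil : M.flats.filter (fun G => G ⊆ F ∧ M.rank G = 0) = {∅} := by
      ext G
      simp only [Finset.mem_filter, Finset.mem_singleton, M.mem_flats]
      constructor
      · rintro ⟨hG, hGF, hG0⟩
        by_contra hne
        have := M.rank_pos_of_nonempty hM (Finset.nonempty_iff_ne_empty.2 hne)
        omega
      · rintro rfl
        exact ⟨hM, Finset.empty_subset F, M.rank_empty⟩
    rw [hfil, Finset.sum_singleton, M.flagSet_zero_card, M.flagSet_zero_card]
  · obtain ⟨k', rfl⟩ : ∃ k', k = k' + 1 := ⟨k - 1, by omega⟩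
    rw [Finset.card_eq_sum_card_fiberwise
      (f := fun f : Fin (k' + 1) → Finset E => f ⟨k', by omega⟩)
      (t := M.flats.filter (fun G => G ⊆ F ∧ M.rank G = k' + 1))]
    · apply Finset.sum_congr rfl
      intro G hG
      simp only [Finset.mem_filter, M.mem_flats] at hG
      congr 1
      ext f
      simp only [Finset.mem_filter, mem_flagSet]
      constructor
      · rintro ⟨⟨h1, h2, h3, h4, h5⟩, htop⟩
        refine ⟨h1, h2, h3, h4, fun i => ?_⟩
        rw [← htop]
        exact M.flag_subset_top (M.mem_flagSet.2 ⟨h1, h2, h3, h4, h5⟩) i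
      · rintro ⟨h1, h2, h3, h4, h5⟩
        refine ⟨⟨h1, h2, h3, h4, fun i => (h5 i).trans hG.2.1⟩, ?_⟩
        symm
        apply M.eq_of_flat_subset_rank (h1 _) (h5 _)
        rw [h3 ⟨k', by omega⟩, hG.2.2]
    · intro f hf
      rw [Finset.mem_coe, mem_flagSet] at hf
      simp only [Finset.mem_coe, Finset.mem_filter, M.mem_flats]
      exact ⟨hf.1 _, hf.2.2.2.2 _, hf.2.2.1 _⟩

end FinMatroid
namespace FinMatroid

open Classical Finset

variable {E : Type*} [Fintype E] [DecidableEq E] [LinearOrder E] (M : FinMatroid E)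

open Classical in
/-- Flags of length `k` in `F` whose top flat contains `e`. -/
noncomputable def topIn (k : ℕ) (F : Finset E) (e : E) : Finset (Fin k → Finset E) :=
  (M.flagSet k F).filter (fun f => ∃ h : 0 < k, e ∈ f ⟨k - 1, by omega⟩)

open Classical in
/-- Flags of length `k` in `F` whose top flat does not contain `e` (all flags if `k = 0`). -/
noncomputable def topOut (k : ℕ) (F : Finset E) (e : E) : Finset (Fin k → Finset E) :=
  (M.flagSet k F).filter (fun f => ¬ ∃ h : 0 < k, e ∈ f ⟨k - 1, by omega⟩)

lemma flagSet_card_split (k : ℕ) (F : Finset E) (e : E) :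
    (M.flagSet k F).card = (M.topIn k F e).card + (M.topOut k F e).card := by
  classical
  rw [topIn, topOut]
  exact (Finset.card_filter_add_card_filter_not _).symm

lemma topIn_zero (F : Finset E) (e : E) : M.topIn 0 F e = ∅ := by
  classical
  rw [topIn, Finset.filter_false_of_mem]
  intro f _
  rintro ⟨h, -⟩
  omega

lemma min'_le_min' {S F : Finset E} (hS : S.Nonempty) (hFne : F.Nonempty) (hSF : S ⊆ F) :
    F.min' hFne ≤ S.min' hS :=
  Finset.min'_le F _ (hSF (S.min'_mem hS))

lemma min'_eq_of_mem {S F : Finset E} (hS : S.Nonempty) (hFne : F.Nonempty) (hSF : S ⊆ F)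
    (he : F.min' hFne ∈ S) : S.min' hS = F.min' hFne :=
  le_antisymm (Finset.min'_le S _ he) (min'_le_min' hS hFne hSF)

lemma min'_lt_of_not_mem {S F : Finset E} (hS : S.Nonempty) (hFne : F.Nonempty) (hSF : S ⊆ F)
    (he : F.min' hFne ∉ S) : F.min' hFne < S.min' hS :=
  lt_of_le_of_ne (min'_le_min' hS hFne hSF) (fun h => he (h ▸ S.min'_mem hS))

lemma min_lt_min_iff {S T : Finset E} (hS : S.Nonempty) (hT : T.Nonempty) :
    S.min < T.min ↔ S.min' hS < T.min' hT := by
  rw [← Finset.coe_min' hS, ← Finset.coe_min' hT]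
  exact WithTop.coe_lt_coe

/-- The key sign-reversing bijection: flags of length `k+1` whose top contains `min F`
are in bijection with flags of length `k` whose top does not, by truncation/extension. -/
lemma topIn_card_eq (hM : M.Loopless) {F : Finset E} (hF : M.IsFlat F) (hFne : F.Nonempty)
    (k : ℕ) :
    (M.topIn (k + 1) F (F.min' hFne)).card = (M.topOut k F (F.min' hFne)).card := by
  classical
  set e := F.min' hFne with he
  have heF : e ∈ F := F.min'_mem hFne
  -- truncation and extension maps
  set dn : (Fin (k + 1) → Finset E) → (Fin k → Finset E) :=
    fun f i => f i.castSucc with hdn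
  set up : (Fin k → Finset E) → (Fin (k + 1) → Finset E) :=
    fun g j => if h : (j : ℕ) < k then g ⟨j, h⟩
      else M.closure (insert e (if h0 : 0 < k then g ⟨k - 1, by omega⟩ else ∅)) with hup
  apply Finset.card_nbij' dn up
  · -- dn maps topIn into topOut
    intro f hf
    simp only [Finset.mem_coe, topIn, Finset.mem_filter, mem_flagSet] at hf
    obtain ⟨⟨h1, h2, h3, h4, h5⟩, hk01, hetop⟩ := hf
    have hfflag : f ∈ M.flagSet (k + 1) F := M.mem_flagSet.2 ⟨h1, h2, h3, h4, h5⟩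
    have htopne : (f ⟨k, by omega⟩).Nonempty := M.flag_nonempty hM hfflag _
    simp only [Finset.mem_coe, topOut, Finset.mem_filter, mem_flagSet]
    refine ⟨⟨fun i => h1 _, fun i j hij => h2 _ _ (Fin.castSucc_lt_castSucc_iff.2 hij),
      fun i => h3 i.castSucc, fun i j hij => h4 _ _ (Fin.castSucc_lt_castSucc_iff.2 hij),
      fun i => h5 _⟩, ?_⟩
    rintro ⟨hk, hmem⟩
    -- e in both f(k-1) and f(k) contradicts min decreasing
    have hidx : (⟨k - 1, by omega⟩ : Fin k).castSucc = ⟨k - 1, by omega⟩ := by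
      apply Fin.ext; simp
    rw [hdn] at hmem
    simp only at hmem
    rw [hidx] at hmem
    clear hidx
    have hprevne : (f ⟨k - 1, by omega⟩).Nonempty := M.flag_nonempty hM hfflag _
    have hlt : (f ⟨k, by omega⟩).min < (f ⟨k - 1, by omega⟩).min :=
      h4 _ _ (Fin.mk_lt_mk.2 (by omega))
    rw [min_lt_min_iff htopne hprevne,
      min'_eq_of_mem htopne hFne (h5 _) (by exact hetop),
      min'_eq_of_mem hprevne hFne (h5 _) hmem] at hlt
    exact lt_irrefl _ hlt
  · -- up maps topOut into topIn
    intro g hg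
    simp only [Finset.mem_coe, topOut, Finset.mem_filter, mem_flagSet] at hg
    obtain ⟨⟨h1, h2, h3, h4, h5⟩, hB⟩ := hg
    have hgflag : g ∈ M.flagSet k F := M.mem_flagSet.2 ⟨h1, h2, h3, h4, h5⟩
    -- the previous top flat G
    set G : Finset E := if h0 : 0 < k then g ⟨k - 1, by omega⟩ else ∅ with hG
    have hGflat : M.IsFlat G := by
      rw [hG]; split
      · exact h1 _
      · exact hM
    have hGrank : M.rank G = k := by
      rw [hG]; split
      · rename_i h0
        have := h3 ⟨k - 1, by omega⟩
        simp only [this]; omega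
      · rename_i h0
        rw [M.rank_empty]; omega
    have hGF : G ⊆ F := by
      rw [hG]; split
      · exact h5 _
      · exact Finset.empty_subset F
    have heG : e ∉ G := by
      rw [hG]; split
      · rename_i h0
        intro hmem
        exact hB ⟨h0, hmem⟩
      · simp
    have hsubG : ∀ i : Fin k, g i ⊆ G := by
      intro i
      rw [hG]
      rcases Nat.lt_or_ge (i : ℕ) (k - 1) with h | h
      · rw [dif_pos i.pos]
        exact (h2 ⟨(i : ℕ), by omega⟩ ⟨k - 1, by omega⟩ (Fin.mk_lt_mk.2 (by omega))).subset
      · rw [dif_pos i.pos]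
        have : i = ⟨k - 1, by omega⟩ := by
          apply Fin.ext; simp; omega
        rw [this]
    -- the new top flat H
    set H : Finset E := M.closure (insert e G) with hH
    have hHflat : M.IsFlat H := M.closure_isFlat _
    have hHF : H ⊆ F := M.closure_subset_of_flat (Finset.insert_subset heF hGF) hF
    have heH : e ∈ H := M.subset_closure _ (Finset.mem_insert_self e G)
    have hGH : G ⊆ H := (Finset.subset_insert e G).trans (M.subset_closure _)
    have hHrank : M.rank H = k + 1 := by
      rw [hH, M.rank_closure, M.rank_insert_flat hGflat heG, hGrank]
    have hHne : H.Nonempty := ⟨e, heH⟩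
    have hminH : H.min' hHne = e := min'_eq_of_mem hHne hFne hHF heH
    have hupval : ∀ j : Fin (k + 1), (j : ℕ) = k → up g j = H := by
      intro j hj
      rw [hup]
      simp only [hj, lt_irrefl, dif_neg, not_false_iff]
      rfl
    have hupval' : ∀ (j : Fin (k + 1)) (h : (j : ℕ) < k), up g j = g ⟨j, h⟩ := by
      intro j h
      rw [hup]
      simp only [h, dif_pos]
    have hne_gi : ∀ i : Fin k, (g i).Nonempty := M.flag_nonempty hM hgflag
    have hgsubH : ∀ i : Fin k, g i ⊆ H := fun i => (hsubG i).trans hGH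
    have hgneH : ∀ i : Fin k, g i ≠ H := by
      intro i h
      have := h3 i
      rw [h, hHrank] at this
      have := i.isLt
      omega
    have hminlt : ∀ i : Fin k, H.min < (g i).min := by
      intro i
      rw [min_lt_min_iff hHne (hne_gi i), hminH]
      apply min'_lt_of_not_mem (hne_gi i) hFne (h5 i)
      intro hmem
      exact heG (hsubG i hmem)
    simp only [Finset.mem_coe, topIn, Finset.mem_filter, mem_flagSet]
    refine ⟨⟨?_, ?_, ?_, ?_, ?_⟩, ?_⟩
    · intro j
      rcases Nat.lt_or_ge (j : ℕ) k with h | h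
      · rw [hupval' j h]; exact h1 _
      · rw [hupval j (by omega)]; exact hHflat
    · intro i j hij
      rw [Fin.lt_def] at hij
      rcases Nat.lt_or_ge (j : ℕ) k with h | h
      · rw [hupval' j h, hupval' i (by omega)]
        exact h2 ⟨(i : ℕ), by omega⟩ ⟨(j : ℕ), by omega⟩ (Fin.mk_lt_mk.2 (by omega))
      · rw [hupval j (by omega), hupval' i (by omega)]
        exact Finset.ssubset_iff_subset_ne.2 ⟨hgsubH _, hgneH _⟩
    · intro j
      rcases Nat.lt_or_ge (j : ℕ) k with h | h
      · rw [hupval' j h]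
        have := h3 ⟨j, h⟩
        simpa using this
      · rw [hupval j (by omega), hHrank]
        omega
    · intro i j hij
      rw [Fin.lt_def] at hij
      rcases Nat.lt_or_ge (j : ℕ) k with h | h
      · rw [hupval' j h, hupval' i (by omega)]
        exact h4 ⟨(i : ℕ), by omega⟩ ⟨(j : ℕ), by omega⟩ (Fin.mk_lt_mk.2 (by omega))
      · rw [hupval j (by omega), hupval' i (by omega)]
        exact hminlt _
    · intro j
      rcases Nat.lt_or_ge (j : ℕ) k with h | h
      · rw [hupval' j h]; exact h5 _
      · rw [hupval j (by omega)]; exact hHF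
    · refine ⟨by omega, ?_⟩
      rw [hupval ⟨k + 1 - 1, by omega⟩ (by simp)]
      exact heH
  ·
    intro f hf
    simp only [Finset.mem_coe, topIn, Finset.mem_filter, mem_flagSet] at hf
    obtain ⟨⟨h1, h2, h3, h4, h5⟩, hk01, hetop⟩ := hf
    funext j
    rcases Nat.lt_or_ge (j : ℕ) k with h | h
    · rw [hup]
      simp only [h, dif_pos, hdn]
      congr 1
    · have hj : (j : ℕ) = k := by have := j.isLt; omega
      rw [hup]
      simp only [hj, lt_irrefl, dif_neg, not_false_iff]
      -- need: closure (insert e P) = f j where P = prev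
      have hjtop : j = ⟨k, by omega⟩ := Fin.ext hj
      set P : Finset E := if h0 : 0 < k then dn f ⟨k - 1, by omega⟩ else ∅ with hP
      have hPflat : M.IsFlat P := by
        rw [hP]; split
        · exact h1 _
        · exact hM
      have hPrank : M.rank P = k := by
        rw [hP]; split
        · rename_i h0
          have := h3 ((⟨k - 1, by omega⟩ : Fin k).castSucc)
          rw [hdn]
          simp only [this]
          simp
          omega
        · rw [M.rank_empty]; omega
      have hPsub : P ⊆ f ⟨k, by omega⟩ := by
        rw [hP]; split
        · rename_i h0
          rw [hdn]
          exact (h2 ⟨k - 1, by omega⟩ ⟨k, by omega⟩ (Fin.mk_lt_mk.2 (by omega))).subset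
        · exact Finset.empty_subset _
      have heP : e ∉ P := by
        rw [hP]; split
        · rename_i h0
          intro hmem
          rw [hdn] at hmem
          simp only at hmem
          have hprevne : (f ((⟨k - 1, by omega⟩ : Fin k).castSucc)).Nonempty :=
            M.nonempty_of_rank_pos (by rw [h3]; omega)
          have htopne : (f ⟨k, by omega⟩).Nonempty :=
            M.nonempty_of_rank_pos (by rw [h3 ⟨k, by omega⟩]; omega)
          have hlt : (f ⟨k, by omega⟩).min < (f ((⟨k - 1, by omega⟩ : Fin k).castSucc)).min :=
            h4 _ _ (Fin.mk_lt_mk.2 (by omega))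
          rw [min_lt_min_iff htopne hprevne,
            min'_eq_of_mem htopne hFne (h5 _) hetop,
            min'_eq_of_mem hprevne hFne (h5 _) hmem] at hlt
          exact lt_irrefl _ hlt
        · simp
      have hsub2 : M.closure (insert e P) ⊆ f ⟨k, by omega⟩ :=
        M.closure_subset_of_flat (Finset.insert_subset hetop hPsub) (h1 _)
      have hrank2 : M.rank (M.closure (insert e P)) = k + 1 := by
        rw [M.rank_closure, M.rank_insert_flat hPflat heP, hPrank]
      have := M.eq_of_flat_subset_rank (M.closure_isFlat (insert e P)) hsub2
        (by rw [hrank2, h3 ⟨k, by omega⟩])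
      rw [hjtop, ← this]
  · -- up ∘ dn = id on topOut
    intro g hg
    funext i
    rw [hdn]
    simp only
    rw [hup]
    have h : ((i.castSucc : Fin (k+1)) : ℕ) < k := i.isLt
    simp only [h, dif_pos]
    congr 1

end FinMatroid
namespace FinMatroid

open Classical Finset

variable {E : Type*} [Fintype E] [DecidableEq E] [LinearOrder E] (M : FinMatroid E)

lemma alt_sum (hM : M.Loopless) {F : Finset E} (hF : M.IsFlat F) (hFne : F.Nonempty) :
    ∀ K : ℕ, ∑ k ∈ Finset.range (K + 1), (-1 : ℤ) ^ k * ((M.flagSet k F).card : ℤ) =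
      (-1 : ℤ) ^ K * ((M.topOut K F (F.min' hFne)).card : ℤ) := by
  intro K
  induction K with
  | zero =>
    rw [Finset.sum_range_one, M.flagSet_card_split 0 F (F.min' hFne), M.topIn_zero]
    simp
  | succ K ih =>
    rw [Finset.sum_range_succ, ih, M.flagSet_card_split (K + 1) F (F.min' hFne),
      M.topIn_card_eq hM hF hFne K]
    push_cast
    ring

lemma alt_sum_zero (hM : M.Loopless) {F : Finset E} (hF : M.IsFlat F) (hFne : F.Nonempty) :
    ∑ k ∈ Finset.range (M.rank F + 2), (-1 : ℤ) ^ k * ((M.flagSet k F).card : ℤ) = 0 := by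
  rw [M.alt_sum hM hF hFne (M.rank F + 1)]
  have h1 : M.flagSet (M.rank F + 1) F = ∅ := M.flagSet_eq_empty (by omega)
  have h2 : M.topOut (M.rank F + 1) F (F.min' hFne) = ∅ := by
    rw [topOut, h1]
    exact Finset.filter_empty _
  rw [h2]
  simp

lemma mu_eq_flag_count (hM : M.Loopless) {mu : Finset E → Finset E → ℤ} (hmu : M.IsMobius mu) :
    ∀ F : Finset E, M.IsFlat F →
      mu ∅ F = (-1 : ℤ) ^ (M.rank F) * ((M.flagSet (M.rank F) F).card : ℤ) := by
  classical
  intro F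
  induction F using Finset.strongInduction with
  | _ F ih =>
  intro hF
  rcases F.eq_empty_or_nonempty with rfl | hFne
  · rw [hmu.1 ∅ (M.mem_flats.2 hM), M.rank_empty, M.flagSet_zero_card]
    simp
  · set s := M.flats.filter (fun G => ∅ ⊆ G ∧ G ⊆ F) with hs
    have hFs : F ∈ s := by
      rw [hs]
      simp only [Finset.mem_filter, M.mem_flats]
      exact ⟨hF, Finset.empty_subset F, Finset.Subset.refl F⟩
    have hsum : ∑ G ∈ s, mu ∅ G = 0 :=
      hmu.2.2 ∅ (M.mem_flats.2 hM) F (M.mem_flats.2 hF)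
        (Finset.ssubset_iff_subset_ne.2 ⟨Finset.empty_subset F,
          Ne.symm (Finset.nonempty_iff_ne_empty.1 hFne)⟩)
    -- the alternating sum of flag counts over all flats inside F vanishes
    have hNsum : ∑ G ∈ s, ((-1 : ℤ) ^ (M.rank G) * ((M.flagSet (M.rank G) G).card : ℤ)) = 0 := by
      rw [← Finset.sum_fiberwise_of_maps_to (g := fun G => M.rank G)
        (t := Finset.range (M.rank F + 2))
        (fun G hG => by
          rw [Finset.mem_range]
          rw [hs] at hG
          simp only [Finset.mem_filter] at hG
          have := M.rank_mono hG.2.2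
          show M.rank G < M.rank F + 2
          omega)]
      rw [← M.alt_sum_zero hM hF hFne]
      apply Finset.sum_congr rfl
      intro k _
      have h1 : ∑ G ∈ s.filter (fun G => M.rank G = k),
          ((-1 : ℤ) ^ (M.rank G) * ((M.flagSet (M.rank G) G).card : ℤ)) =
          ∑ G ∈ s.filter (fun G => M.rank G = k), ((-1 : ℤ) ^ k * ((M.flagSet k G).card : ℤ)) := by
        apply Finset.sum_congr rfl
        intro G hG
        rw [(Finset.mem_filter.1 hG).2]
      rw [h1, ← Finset.mul_sum]
      congr 1
      have h2 : s.filter (fun G => M.rank G = k) =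
          M.flats.filter (fun G => G ⊆ F ∧ M.rank G = k) := by
        rw [hs, Finset.filter_filter]
        apply Finset.filter_congr
        intro G _
        simp only [Finset.empty_subset, true_and]
      rw [h2, M.flagSet_card_eq_sum hM hF k]
      push_cast
      rfl
    have herase : ∀ G ∈ s.erase F,
        mu ∅ G = (-1 : ℤ) ^ (M.rank G) * ((M.flagSet (M.rank G) G).card : ℤ) := by
      intro G hG
      have hGF : G ≠ F := Finset.ne_of_mem_erase hG
      have hGs := Finset.mem_of_mem_erase hG
      rw [hs] at hGs
      simp only [Finset.mem_filter, M.mem_flats] at hGs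
      exact ih G (Finset.ssubset_iff_subset_ne.2 ⟨hGs.2.2, hGF⟩) hGs.1
    have e1 : ∑ G ∈ s.erase F, mu ∅ G + mu ∅ F = 0 := by
      rw [Finset.sum_erase_add _ _ hFs]; exact hsum
    have e2 : ∑ G ∈ s.erase F, mu ∅ G +
        (-1 : ℤ) ^ (M.rank F) * ((M.flagSet (M.rank F) F).card : ℤ) = 0 := by
      rw [Finset.sum_congr rfl herase, Finset.sum_erase_add _ _ hFs]
      exact hNsum
    linarith

end FinMatroid
namespace FinMatroid

open Classical Finset Polynomial

lemma zero_lt_min_iff {n : ℕ} {S : Finset (Fin (n + 1))} (hS : S.Nonempty) :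
    ((0 : Fin (n + 1)) : WithTop (Fin (n + 1))) < S.min ↔ (0 : Fin (n + 1)) ∉ S := by
  rw [← Finset.coe_min' hS, WithTop.coe_lt_coe, Fin.pos_iff_ne_zero]
  constructor
  · intro h h0
    exact h (le_antisymm (Finset.min'_le _ _ h0) (Fin.zero_le _))
  · intro h h0
    exact h (h0 ▸ S.min'_mem hS)

lemma topOut_card_eq (n d k : ℕ) (M : FinMatroid (Fin (n + 1))) (hM : M.Loopless)
    (hrk : M.rk = d + 1) (hk : k ≤ d) :
    (M.topOut k Finset.univ (0 : Fin (n + 1))).card =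
      Nat.card {f : Fin k → Finset (Fin (n + 1)) //
        (∀ i, M.IsFlat (f i) ∧ f i ≠ ∅ ∧ f i ≠ Finset.univ) ∧
        (∀ i j, i < j → f i ⊂ f j) ∧
        (∀ i : Fin k, M.rank (f i) = (i : ℕ) + 1) ∧
        (∀ i j, i < j → (f j).min < (f i).min) ∧
        (∀ i, ((0 : Fin (n + 1)) : WithTop (Fin (n + 1))) < (f i).min)} := by
  classical
  rw [Nat.card_eq_fintype_card, Fintype.card_subtype]
  congr 1
  ext f
  simp only [topOut, Finset.mem_filter, mem_flagSet, Finset.mem_univ, true_and]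
  constructor
  · rintro ⟨⟨h1, h2, h3, h4, h5⟩, hB⟩
    have hne : ∀ i, (f i).Nonempty := fun i =>
      M.nonempty_of_rank_pos (by rw [h3 i]; omega)
    have h0notmem : ∀ i, (0 : Fin (n + 1)) ∉ f i := by
      intro i hi0
      have hkpos : 0 < k := i.pos
      obtain ⟨k', rfl⟩ : ∃ k', k = k' + 1 := ⟨k - 1, by omega⟩
      have hsub : f i ⊆ f ⟨k', by omega⟩ :=
        M.flag_subset_top (M.mem_flagSet.2 ⟨h1, h2, h3, h4, fun _ => Finset.subset_univ _⟩) i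
      exact hB ⟨by omega, hsub hi0⟩
    refine ⟨fun i => ⟨h1 i, Finset.nonempty_iff_ne_empty.1 (hne i), ?_⟩, h2, h3, h4,
      fun i => (zero_lt_min_iff (hne i)).2 (h0notmem i)⟩
    intro huniv
    have := h3 i
    rw [huniv] at this
    have h2' : M.rank Finset.univ = d + 1 := hrk
    have := i.isLt
    omega
  · rintro ⟨h1, h2, h3, h4, h5⟩
    refine ⟨⟨fun i => (h1 i).1, h2, h3, h4, fun _ => Finset.subset_univ _⟩, ?_⟩
    rintro ⟨hkpos, hmem⟩
    have hne : (f ⟨k - 1, by omega⟩).Nonempty :=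
      M.nonempty_of_rank_pos (by rw [h3 ⟨k - 1, by omega⟩]; omega)
    exact (zero_lt_min_iff hne).1 (h5 ⟨k - 1, by omega⟩) hmem

end FinMatroid


set_option maxHeartbeats 1600000 in
open FinMatroid in
/-- **Björner's formula.** Let `M` be a loopless matroid of rank `d+1` on the ground set
`E = {0, 1, …, n}`, and write the reduced characteristic polynomial as
`χ̄_M(t) = χ_M(t)/(t-1) = Σ_k (-1)^k m_k t^{d-k}`. Then `m_k` is the number of `k`-step
flags `F_1 ⊊ ⋯ ⊊ F_k` of nonempty proper flats of `M` that are initial (`r(F_i) = i`) and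
descending (`min F_1 > min F_2 > ⋯ > min F_k > 0`). -/
theorem bjorner_flag_count (n d : ℕ) (M : FinMatroid (Fin (n + 1)))
    (hM : M.Loopless) (hrk : M.rk = d + 1)
    (mu : Finset (Fin (n + 1)) → Finset (Fin (n + 1)) → ℤ) (hmu : M.IsMobius mu)
    (q : Polynomial ℤ) (hq : M.charPoly mu = (Polynomial.X - 1) * q)
    (k : ℕ) (hk : k ≤ d) :
    (-1 : ℤ) ^ k * q.coeff (d - k) =
      Nat.card {f : Fin k → Finset (Fin (n + 1)) //
        (∀ i, M.IsFlat (f i) ∧ f i ≠ ∅ ∧ f i ≠ Finset.univ) ∧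
        (∀ i j, i < j → f i ⊂ f j) ∧
        (∀ i : Fin k, M.rank (f i) = (i : ℕ) + 1) ∧
        (∀ i j, i < j → (f j).min < (f i).min) ∧
        (∀ i, ((0 : Fin (n + 1)) : WithTop (Fin (n + 1))) < (f i).min)} := by

  classical
  have hrkuniv : M.rank Finset.univ = d + 1 := hrk
  have hune : (Finset.univ : Finset (Fin (n + 1))).Nonempty := ⟨0, Finset.mem_univ 0⟩
  have hmin : Finset.univ.min' hune = (0 : Fin (n + 1)) :=
    le_antisymm (Finset.min'_le _ _ (Finset.mem_univ 0)) (Fin.zero_le _)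
  have huflat : M.IsFlat (Finset.univ : Finset (Fin (n + 1))) := M.univ_isFlat
  set az : ℕ → ℤ := fun j => ((M.topIn j Finset.univ (0 : Fin (n + 1))).card : ℤ) with haz
  set bz : ℕ → ℤ := fun j => ((M.topOut j Finset.univ (0 : Fin (n + 1))).card : ℤ) with hbz
  have hsplit : ∀ j, ((M.flagSet j Finset.univ).card : ℤ) = az j + bz j := by
    intro j
    rw [haz, hbz]
    push_cast [M.flagSet_card_split j Finset.univ (0 : Fin (n + 1))]
    ring
  have h_a0 : az 0 = 0 := by rw [haz]; simp [M.topIn_zero]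
  have h_ab : ∀ j, az (j + 1) = bz j := by
    intro j
    have h := M.topIn_card_eq hM huflat hune j
    rw [hmin] at h
    rw [haz, hbz]
    show ((M.topIn (j + 1) Finset.univ (0 : Fin (n + 1))).card : ℤ)
      = ((M.topOut j Finset.univ (0 : Fin (n + 1))).card : ℤ)
    exact_mod_cast h
  have h_btop : bz (d + 1) = 0 := by
    rw [hbz]
    simp only [Nat.cast_eq_zero, Finset.card_eq_zero]
    rw [Finset.eq_empty_iff_forall_notMem]
    intro f hf
    simp only [topOut, Finset.mem_filter, M.mem_flagSet] at hf
    obtain ⟨⟨h1, h2, h3, h4, h5⟩, hB⟩ := hf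
    have htop : f ⟨d, by omega⟩ = Finset.univ := by
      symm
      apply M.eq_of_flat_subset_rank (h1 _) (Finset.subset_univ _)
      rw [h3 ⟨d, by omega⟩, hrkuniv]
    apply hB
    refine ⟨by omega, ?_⟩
    show (0 : Fin (n + 1)) ∈ f ⟨d, by omega⟩
    rw [htop]
    exact Finset.mem_univ _
  -- express the characteristic polynomial through flag counts
  have hchi : M.charPoly mu = ∑ j ∈ Finset.range (d + 2),
      Polynomial.C ((-1 : ℤ) ^ j * ((M.flagSet j Finset.univ).card : ℤ)) *
        Polynomial.X ^ (d + 1 - j) := by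
    rw [charPoly, if_pos hM]
    rw [← Finset.sum_fiberwise_of_maps_to (g := fun F => M.rank F)
      (t := Finset.range (d + 2))
      (fun F hF => by
        rw [Finset.mem_range]
        have := M.rank_mono (Finset.subset_univ F)
        show M.rank F < d + 2
        omega)]
    apply Finset.sum_congr rfl
    intro j _
    have hinner : ∀ F ∈ M.flats.filter (fun F => M.rank F = j),
        Polynomial.C (mu ∅ F) * Polynomial.X ^ (M.rk - M.rank F) =
        Polynomial.C ((-1 : ℤ) ^ j * ((M.flagSet j F).card : ℤ)) * Polynomial.X ^ (d + 1 - j) := by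
      intro F hF
      simp only [Finset.mem_filter, M.mem_flats] at hF
      rw [M.mu_eq_flag_count hM hmu F hF.1, hF.2, rk, hrkuniv]
    rw [Finset.sum_congr rfl hinner, ← Finset.sum_mul, ← map_sum, ← Finset.mul_sum]
    congr 2
    have hfil : M.flats.filter (fun F => M.rank F = j) =
        M.flats.filter (fun F => F ⊆ Finset.univ ∧ M.rank F = j) := by
      apply Finset.filter_congr
      intro F _
      simp only [Finset.subset_univ, true_and]
    rw [M.flagSet_card_eq_sum hM huflat j, hfil]
    push_cast
    rfl
  -- the factored form
  set p : Polynomial ℤ := ∑ j ∈ Finset.range (d + 1),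
      Polynomial.C ((-1 : ℤ) ^ j * bz j) * Polynomial.X ^ (d - j) with hp
  have hfact : M.charPoly mu = (Polynomial.X - 1) * p := by
    rw [hchi]
    have hL : ∑ j ∈ Finset.range (d + 2),
        Polynomial.C ((-1 : ℤ) ^ j * ((M.flagSet j Finset.univ).card : ℤ)) *
          Polynomial.X ^ (d + 1 - j)
        = ∑ j ∈ Finset.range (d + 2),
            Polynomial.C ((-1 : ℤ) ^ j * az j) * Polynomial.X ^ (d + 1 - j)
          + ∑ j ∈ Finset.range (d + 2),
            Polynomial.C ((-1 : ℤ) ^ j * bz j) * Polynomial.X ^ (d + 1 - j) := by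
      rw [← Finset.sum_add_distrib]
      apply Finset.sum_congr rfl
      intro j _
      rw [hsplit j, mul_add, map_add, add_mul]
    have hA : ∑ j ∈ Finset.range (d + 2),
        Polynomial.C ((-1 : ℤ) ^ j * az j) * Polynomial.X ^ (d + 1 - j)
        = - ∑ j ∈ Finset.range (d + 1),
            Polynomial.C ((-1 : ℤ) ^ j * bz j) * Polynomial.X ^ (d - j) := by
      rw [Finset.sum_range_succ']
      have hterm : ∀ j ∈ Finset.range (d + 1),
          Polynomial.C ((-1 : ℤ) ^ (j + 1) * az (j + 1)) * Polynomial.X ^ (d + 1 - (j + 1))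
          = -(Polynomial.C ((-1 : ℤ) ^ j * bz j) * Polynomial.X ^ (d - j)) := by
        intro j _
        rw [h_ab j, show d + 1 - (j + 1) = d - j from by omega,
          show ((-1 : ℤ)) ^ (j + 1) * bz j = -((-1 : ℤ) ^ j * bz j) from by ring,
          map_neg, neg_mul]
      rw [Finset.sum_congr rfl hterm, Finset.sum_neg_distrib, h_a0]
      simp
    have hB : ∑ j ∈ Finset.range (d + 2),
        Polynomial.C ((-1 : ℤ) ^ j * bz j) * Polynomial.X ^ (d + 1 - j)
        = ∑ j ∈ Finset.range (d + 1),
            Polynomial.C ((-1 : ℤ) ^ j * bz j) * Polynomial.X ^ (d + 1 - j) := by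
      rw [Finset.sum_range_succ, h_btop]
      simp
    rw [hL, hA, hB, hp, sub_mul, one_mul, Finset.mul_sum]
    rw [neg_add_eq_sub]
    congr 1
    apply Finset.sum_congr rfl
    intro j hj
    rw [Finset.mem_range] at hj
    rw [show d + 1 - j = (d - j) + 1 from by omega, pow_succ]
    ring
  -- cancel the factor X - 1
  have hX1 : (Polynomial.X - 1 : Polynomial ℤ) ≠ 0 := by
    intro h
    have := congrArg (Polynomial.eval 2) h
    simp at this
  have hqp : q = p := by
    apply mul_left_cancel₀ hX1
    rw [← hq, hfact]
  -- extract the coefficient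
  have hcoeff : p.coeff (d - k) = (-1 : ℤ) ^ k * bz k := by
    rw [hp, Polynomial.finset_sum_coeff]
    rw [Finset.sum_eq_single k]
    · rw [Polynomial.coeff_C_mul, Polynomial.coeff_X_pow, if_pos rfl, mul_one]
    · intro j hj hjk
      rw [Finset.mem_range] at hj
      rw [Polynomial.coeff_C_mul, Polynomial.coeff_X_pow, if_neg (by omega), mul_zero]
    · intro hk'
      rw [Finset.mem_range] at hk'
      omega
  have hfin := topOut_card_eq n d k M hM hrk hk
  rw [hqp, hcoeff, ← mul_assoc, ← mul_pow,
    show ((-1 : ℤ) * (-1)) = 1 from by norm_num, one_pow, one_mul, hbz]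
  show ((M.topOut k Finset.univ (0 : Fin (n + 1))).card : ℤ) = _
  exact_mod_cast congrArg (Nat.cast : ℕ → ℤ) hfin
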